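/- Let X be a compact metric space, F = span{f_1,...,f_k} a finite-dimensional space of continuous functions, and K a symmetric continuous kernel on X×X. Then K is conditionally positive definite with respect to F (i.e., ∑ᵢⱼ αᵢαⱼK(xᵢ,xⱼ) ≥ 0 whenever ∑ᵢ αᵢf(xᵢ)=0 for all f ∈ F) if and only if for every finite signed Borel measure μ on X satisfying ∫ f dμ = 0 for all f ∈ F, we have ∬ K(x,y) dμ(x)dμ(y) ≥ 0. -/

import Mathlib

open MeasureTheory NNReal ENNReal

set_option linter.unusedSectionVars false
set_option linter.unusedVariables false
set_option maxHeartbeats 2000000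

section CPDHelpers

variable {X : Type*} [MetricSpace X] [CompactSpace X] [MeasurableSpace X] [BorelSpace X]

lemma cont_of_mem_span {k : ℕ} {f : Fin k → X → ℝ} (hfc : ∀ i, Continuous (f i))
    {g : X → ℝ} (hg : g ∈ Submodule.span ℝ (Set.range f)) : Continuous g := by
  induction hg using Submodule.span_induction with
  | mem x hx => obtain ⟨i, rfl⟩ := hx; exact hfc i
  | zero => exact continuous_const
  | add x y _ _ hx hy => exact hx.add hy
  | smul c x _ hx => exact hx.const_smul c

lemma integrable_of_cont {g : X → ℝ} (hg : Continuous g) (μ : Measure X) [IsFiniteMeasure μ] :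
    Integrable g μ :=
  hg.integrable_of_hasCompactSupport ((isClosed_tsupport g).isCompact)

lemma bounded_of_cont {Y : Type*} [TopologicalSpace Y] [CompactSpace Y] {g : Y → ℝ}
    (hg : Continuous g) : ∃ C : ℝ, 0 ≤ C ∧ ∀ y, |g y| ≤ C := by
  obtain ⟨C, hC⟩ := isCompact_univ.exists_bound_of_continuousOn hg.continuousOn
  exact ⟨max C 0, le_max_right _ _, fun y => (hC y trivial).trans (le_max_left _ _)⟩

lemma cont_param_integral {K : X → X → ℝ} (hKcont : Continuous fun p : X × X => K p.1 p.2)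
    (μ : Measure X) [IsFiniteMeasure μ] :
    Continuous fun x => ∫ y, K x y ∂μ := by
  obtain ⟨C, hC0, hC⟩ := bounded_of_cont hKcont
  rw [continuous_iff_continuousAt]
  intro x₀
  apply continuousAt_of_dominated (bound := fun _ => C)
  · exact Filter.Eventually.of_forall fun x =>
      (hKcont.comp (Continuous.prodMk_right x)).aestronglyMeasurable
  · exact Filter.Eventually.of_forall fun x =>
      ae_of_all _ fun y => by simpa [Real.norm_eq_abs] using hC (x, y)
  · exact integrable_const C
  · exact ae_of_all _ fun y =>
      (hKcont.comp (continuous_id.prodMk continuous_const)).continuousAt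

lemma ann_span {k n : ℕ} (f : Fin k → X → ℝ) (x : Fin n → X) (α : Fin n → ℝ)
    (h : ∀ j, ∑ i, α i * f j (x i) = 0) :
    ∀ g ∈ Submodule.span ℝ (Set.range f), ∑ i, α i * g (x i) = 0 := by
  intro g hg
  induction hg using Submodule.span_induction with
  | mem v hv => obtain ⟨j, rfl⟩ := hv; exact h j
  | zero => simp
  | add v w _ _ hv hw =>
      simp only [Pi.add_apply, mul_add, Finset.sum_add_distrib, hv, hw, add_zero]
  | smul c v _ hv =>
      simp only [Pi.smul_apply, smul_eq_mul]
      rw [show (∑ i, α i * (c * v (x i))) = c * ∑ i, α i * v (x i) by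
        rw [Finset.mul_sum]; apply Finset.sum_congr rfl; intros; ring, hv, mul_zero]

lemma exists_partition (δ : ℝ) (hδ : 0 < δ) :
    ∃ (n : ℕ) (c : Fin n → X) (A : Fin n → Set X),
      (∀ i, MeasurableSet (A i)) ∧ (Pairwise (Function.onFun Disjoint A)) ∧
      (⋃ i, A i) = Set.univ ∧ ∀ i, ∀ x ∈ A i, dist x (c i) < δ := by
  obtain ⟨t, ht⟩ := isCompact_univ.elim_finite_subcover
    (fun x : X => Metric.ball x δ) (fun x => Metric.isOpen_ball)
    (fun x _ => Set.mem_iUnion.2 ⟨x, Metric.mem_ball_self hδ⟩)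
  set n := t.card with hn
  obtain ⟨e⟩ : Nonempty (Fin n ≃ {x // x ∈ t}) := ⟨(t.equivFin).symm⟩
  set c : Fin n → X := fun i => (e i : X) with hc
  refine ⟨n, c, fun i => Metric.ball (c i) δ \ ⋃ j : {j : Fin n // j < i}, Metric.ball (c j) δ,
    fun i => (measurableSet_ball).diff (MeasurableSet.iUnion fun j => measurableSet_ball),
    ?_, ?_, fun i x hx => by simpa [Metric.mem_ball] using hx.1⟩
  · intro i j hij
    rcases lt_or_gt_of_ne hij with h | h
    · refine Set.disjoint_left.2 fun x hxi hxj => ?_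
      exact hxj.2 (Set.mem_iUnion.2 ⟨⟨i, h⟩, hxi.1⟩)
    · refine Set.disjoint_left.2 fun x hxi hxj => ?_
      exact hxi.2 (Set.mem_iUnion.2 ⟨⟨j, h⟩, hxj.1⟩)
  · apply Set.eq_univ_of_forall
    intro x
    have hx : ∃ i : Fin n, x ∈ Metric.ball (c i) δ := by
      have := ht (Set.mem_univ x)
      simp only [Set.mem_iUnion] at this
      obtain ⟨y, hyt, hxy⟩ := this
      exact ⟨e.symm ⟨y, hyt⟩, by simpa [hc] using hxy⟩
    classical
    obtain ⟨i, hi, hmin⟩ := Finset.exists_min_image (Finset.univ.filter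
      (fun i => x ∈ Metric.ball (c i) δ)) id (by
        obtain ⟨i, hi⟩ := hx; exact ⟨i, Finset.mem_filter.2 ⟨Finset.mem_univ _, hi⟩⟩)
    simp only [Finset.mem_filter] at hi
    refine Set.mem_iUnion.2 ⟨i, hi.2, ?_⟩
    intro hmem
    obtain ⟨⟨j, hji⟩, hj⟩ := Set.mem_iUnion.1 hmem
    exact absurd (hmin j (Finset.mem_filter.2 ⟨Finset.mem_univ _, hj⟩)) (not_le.2 hji)

lemma sum_measure_partition (μ : Measure X) [IsFiniteMeasure μ] {n : ℕ} (A : Fin n → Set X)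
    (hmeas : ∀ i, MeasurableSet (A i)) (hdisj : Pairwise (Function.onFun Disjoint A))
    (hcover : (⋃ i, A i) = Set.univ) :
    ∑ i, (μ (A i)).toReal = (μ Set.univ).toReal := by
  rw [← hcover, measure_iUnion hdisj hmeas, tsum_fintype,
    ENNReal.toReal_sum (fun i _ => (measure_lt_top μ _).ne)]

lemma approx_integral (μ : Measure X) [IsFiniteMeasure μ] {g : X → ℝ} (hg : Continuous g)
    {n : ℕ} (c : Fin n → X) (A : Fin n → Set X)
    (hmeas : ∀ i, MeasurableSet (A i)) (hdisj : Pairwise (Function.onFun Disjoint A))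
    (hcover : (⋃ i, A i) = Set.univ) {ε : ℝ}
    (hsmall : ∀ i, ∀ x ∈ A i, |g x - g (c i)| ≤ ε) :
    |(∫ x, g x ∂μ) - ∑ i, (μ (A i)).toReal * g (c i)| ≤ ε * (μ Set.univ).toReal := by
  have hint : Integrable g μ := integrable_of_cont hg μ
  have h1 : (∫ x, g x ∂μ) = ∑ i, ∫ x in A i, g x ∂μ := by
    rw [← setIntegral_univ, ← hcover, integral_iUnion hmeas hdisj
      (by rw [hcover]; exact hint.integrableOn)]
    exact tsum_fintype _
  have h2 : ∀ i, |(∫ x in A i, g x ∂μ) - (μ (A i)).toReal * g (c i)| ≤ ε * (μ (A i)).toReal := by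
    intro i
    have : (∫ x in A i, g x ∂μ) - (μ (A i)).toReal * g (c i)
        = ∫ x in A i, (g x - g (c i)) ∂μ := by
      rw [integral_sub hint.integrableOn (integrableOn_const (measure_lt_top μ _).ne)]
      simp [Measure.restrict_apply_univ, mul_comm, measureReal_def]
    rw [this]
    have := norm_setIntegral_le_of_norm_le_const (f := fun x => g x - g (c i)) (measure_lt_top μ (A i))
      (fun x hx => by simpa [Real.norm_eq_abs] using hsmall i x hx)
    simpa [Real.norm_eq_abs, mul_comm, measureReal_def] using this
  calc |(∫ x, g x ∂μ) - ∑ i, (μ (A i)).toReal * g (c i)|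
      = |∑ i, ((∫ x in A i, g x ∂μ) - (μ (A i)).toReal * g (c i))| := by
        rw [h1, ← Finset.sum_sub_distrib]
    _ ≤ ∑ i, |(∫ x in A i, g x ∂μ) - (μ (A i)).toReal * g (c i)| :=
        Finset.abs_sum_le_sum_abs _ _
    _ ≤ ∑ i, ε * (μ (A i)).toReal := Finset.sum_le_sum fun i _ => h2 i
    _ = ε * ∑ i, (μ (A i)).toReal := by rw [Finset.mul_sum]
    _ = ε * (μ Set.univ).toReal := by rw [sum_measure_partition μ A hmeas hdisj hcover]

lemma exists_interp {k : ℕ} (f : Fin k → X → ℝ) (hli : LinearIndependent ℝ f) :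
    ∃ (m : ℕ) (y : Fin m → X) (R : (Fin k → ℝ) →ₗ[ℝ] (Fin m → ℝ)),
      (∀ (d : Fin k → ℝ) (j : Fin k), (∑ l, R d l * f j (y l)) = d j) ∧
      ∃ Lc : ℝ, 0 ≤ Lc ∧ ∀ d : Fin k → ℝ, (∑ l, |R d l|) ≤ Lc * ∑ j, |d j| := by
  classical
  set E := EuclideanSpace ℝ (Fin k)
  set Eq : (Fin k → ℝ) ≃ₗ[ℝ] E := (WithLp.linearEquiv 2 ℝ (Fin k → ℝ)).symm with hEq
  set Φ : X → E := fun x => Eq (fun j => f j x) with hΦ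
  have hspanE : Submodule.span ℝ (Set.range Φ) = ⊤ := by
    rw [← Submodule.orthogonal_eq_bot_iff]
    rw [Submodule.eq_bot_iff]
    intro u hu
    have hu' : ∀ x : X, (∑ j, u j * f j x) = 0 := by
      intro x
      have hu2 := (Submodule.mem_orthogonal' _ _).1 hu (Φ x) (Submodule.subset_span ⟨x, rfl⟩)
      change ∑ i, inner ℝ (u i) ((Φ x) i) = (0:ℝ) at hu2
      change ∑ i, f i x * u i = (0:ℝ) at hu2
      simpa [mul_comm] using hu2
    have : ∀ j, (fun j => u j : Fin k → ℝ) j = 0 := by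
      apply Fintype.linearIndependent_iff.1 hli
      funext x
      simpa [Finset.sum_apply] using hu' x
    ext j
    exact this j
  set Φ' : X → (Fin k → ℝ) := fun x j => f j x with hΦ'
  have hspan : Submodule.span ℝ (Set.range Φ') = ⊤ := by
    have := congrArg (Submodule.map (Eq.symm : E →ₗ[ℝ] (Fin k → ℝ))) hspanE
    rwa [Submodule.map_span, ← Set.range_comp, Submodule.map_top, LinearEquiv.range,
      show (Eq.symm : E →ₗ[ℝ] (Fin k → ℝ)) ∘ Φ = Φ' from funext fun x => Eq.symm_apply_apply _]
      at this
  have hb : ∀ j : Fin k, ∃ t : Finset (Fin k → ℝ), ↑t ⊆ Set.range Φ' ∧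
      Pi.single j (1:ℝ) ∈ Submodule.span ℝ (t : Set (Fin k → ℝ)) := by
    intro j
    exact Submodule.mem_span_finite_of_mem_span (by rw [hspan]; trivial)
  choose ts hts hmem using hb
  set t : Finset (Fin k → ℝ) := Finset.univ.biUnion ts with ht
  have htsub : (t : Set (Fin k → ℝ)) ⊆ Set.range Φ' := by
    intro v hv
    simp only [ht, Finset.coe_biUnion, Set.mem_iUnion] at hv
    obtain ⟨j, _, hj⟩ := hv
    exact hts j hj
  have htspan : Submodule.span ℝ (t : Set (Fin k → ℝ)) = ⊤ := by
    rw [eq_top_iff, ← (Pi.basisFun ℝ (Fin k)).span_eq, Submodule.span_le]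
    rintro v ⟨j, rfl⟩
    have : Pi.basisFun ℝ (Fin k) j = Pi.single j (1:ℝ) := by
      simp [Pi.basisFun_apply]
    rw [this]
    exact Submodule.span_mono (by
      intro w hw
      simp only [ht, Finset.coe_biUnion, Set.mem_iUnion]
      exact ⟨j, Finset.mem_univ j, hw⟩) (hmem j)
  set m := t.card with hm
  set e : Fin m ≃ {x // x ∈ t} := t.equivFin.symm with he
  have hchoice : ∀ l : Fin m, ∃ x : X, Φ' x = (e l : Fin k → ℝ) := fun l => htsub (e l).2
  choose y hy using hchoice
  set V : Fin m → (Fin k → ℝ) := fun l => Φ' (y l) with hV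
  have hrangeV : Set.range V = (t : Set (Fin k → ℝ)) := by
    ext v
    constructor
    · rintro ⟨l, rfl⟩; rw [hV]; simp only; rw [hy l]; exact (e l).2
    · intro hv
      exact ⟨e.symm ⟨v, hv⟩, by simp [hV, hy]⟩
  set P : (Fin m → ℝ) →ₗ[ℝ] (Fin k → ℝ) := Fintype.linearCombination ℝ V with hP
  have hPsurj : LinearMap.range P = ⊤ := by
    rw [hP, Fintype.range_linearCombination, hrangeV, htspan]
  obtain ⟨R, hR⟩ := P.exists_rightInverse_of_surjective hPsurj
  have hPR : ∀ d : Fin k → ℝ, P (R d) = d := fun d => congrArg (fun φ => φ d) hR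
  refine ⟨m, y, R, ?_, ?_⟩
  · intro d j
    have := congrArg (fun v => v j) (hPR d)
    rw [hP] at this
    simp only [Fintype.linearCombination_apply] at this
    rw [Finset.sum_apply] at this
    simpa [hV, hΦ', mul_comm] using this
  · refine ⟨∑ j, ∑ l, |R (Pi.single j 1) l|, by positivity, fun d => ?_⟩
    have hd : R d = ∑ j, d j • R (Pi.single j (1:ℝ)) := by
      have hdd : d = ∑ j, d j • (Pi.single j (1:ℝ) : Fin k → ℝ) := by
        ext i
        rw [Finset.sum_apply]
        simp [Pi.single_apply]
      conv_lhs => rw [hdd]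
      rw [map_sum]
      simp
    calc (∑ l, |R d l|) ≤ ∑ l, ∑ j, |d j| * |R (Pi.single j 1) l| := by
          apply Finset.sum_le_sum
          intro l _
          rw [hd]
          rw [Finset.sum_apply]
          refine (Finset.abs_sum_le_sum_abs _ _).trans ?_
          apply Finset.sum_le_sum
          intro j _
          simp [abs_mul]
      _ = ∑ j, |d j| * ∑ l, |R (Pi.single j 1) l| := by
          rw [Finset.sum_comm]
          simp [Finset.mul_sum]
      _ ≤ ∑ j, (∑ j', |d j'|) * ∑ l, |R (Pi.single j 1) l| := by
          apply Finset.sum_le_sum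
          intro j _
          apply mul_le_mul_of_nonneg_right _ (by positivity)
          exact Finset.single_le_sum (fun j' _ => abs_nonneg (d j')) (Finset.mem_univ j)
      _ = (∑ j, ∑ l, |R (Pi.single j 1) l|) * ∑ j, |d j| := by
          rw [← Finset.mul_sum, mul_comm]

lemma integral_dirac_sum {n : ℕ} (w : Fin n → ℝ≥0) (x : Fin n → X) {g : X → ℝ}
    (hg : Continuous g) :
    (∫ z, g z ∂(∑ i, ((w i : ENNReal) • Measure.dirac (x i)))) = ∑ i, (w i : ℝ) * g (x i) := by
  rw [integral_finset_sum_measure (fun i _ =>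
    (integrable_of_cont hg (Measure.dirac (x i))).smul_measure ENNReal.coe_ne_top)]
  congr 1
  funext i
  rw [integral_smul_measure, integral_dirac]
  simp [smul_eq_mul]

lemma toNNReal_sub_self (r : ℝ) : ((r.toNNReal : ℝ)) - (((-r).toNNReal : ℝ)) = r := by
  rcases le_total r 0 with h | h
  · rw [Real.toNNReal_of_nonpos h]
    simp [Real.coe_toNNReal _ (neg_nonneg.2 h)]
  · rw [Real.toNNReal_of_nonpos (neg_nonpos.2 h)]
    simp [Real.coe_toNNReal _ h]

end CPDHelpers

theorem cpd_iff_signed_measure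
    {X : Type*} [MetricSpace X] [CompactSpace X] [MeasurableSpace X] [BorelSpace X]
    {k : ℕ} (f : Fin k → X → ℝ) (hfc : ∀ i, Continuous (f i))
    (hli : LinearIndependent ℝ f)
    (K : X → X → ℝ) (hKsymm : ∀ x y, K x y = K y x)
    (hKcont : Continuous fun p : X × X => K p.1 p.2) :
    (∀ (n : ℕ) (x : Fin n → X) (α : Fin n → ℝ),
        (∀ g ∈ Submodule.span ℝ (Set.range f), ∑ i, α i * g (x i) = 0) →
        0 ≤ ∑ i, ∑ j, α i * α j * K (x i) (x j))
      ↔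
    (∀ (μ ν : Measure X), IsFiniteMeasure μ → IsFiniteMeasure ν →
        (∀ g ∈ Submodule.span ℝ (Set.range f),
          (∫ x, g x ∂μ) - (∫ x, g x ∂ν) = 0) →
        0 ≤ (∫ x, ∫ y, K x y ∂μ ∂μ) - (∫ x, ∫ y, K x y ∂ν ∂μ)
            - (∫ x, ∫ y, K x y ∂μ ∂ν) + (∫ x, ∫ y, K x y ∂ν ∂ν)) := by
  constructor
  · -- CPD for sums implies CPD for measures
    intro H μ ν hμ hν hz
    obtain ⟨C, hC0, hC⟩ := bounded_of_cont hKcont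
    obtain ⟨m, y, R, hRy, Lc, hLc0, hLcb⟩ := exists_interp f hli
    set T1 := ∫ x, ∫ y, K x y ∂μ ∂μ with hT1
    set T2 := ∫ x, ∫ y, K x y ∂ν ∂μ with hT2
    set T3 := ∫ x, ∫ y, K x y ∂μ ∂ν with hT3
    set T4 := ∫ x, ∫ y, K x y ∂ν ∂ν with hT4
    set Mμ := (μ Set.univ).toReal with hMμ
    set Mν := (ν Set.univ).toReal with hMν
    have hMμ0 : 0 ≤ Mμ := ENNReal.toReal_nonneg
    have hMν0 : 0 ≤ Mν := ENNReal.toReal_nonneg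
    set M := Mμ + Mν with hM
    have hM0 : 0 ≤ M := by positivity
    set L0 := Lc * (k : ℝ) * M with hL0
    have hL00 : 0 ≤ L0 := by positivity
    set CC := 2*M^2 + 2*C*M*L0 + C*L0^2 with hCC
    have hCC0 : 0 ≤ CC := by positivity
    have hKzc : ∀ z : X, Continuous fun y => K z y :=
      fun z => hKcont.comp (Continuous.prodMk_right z)
    suffices hkey : ∀ ε' : ℝ, 0 < ε' → ε' ≤ 1 → -(CC * ε') ≤ T1 - T2 - T3 + T4 by
      by_contra hcon
      push_neg at hcon
      set EE := T1 - T2 - T3 + T4 with hEE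
      have hden : (0:ℝ) < CC + 1 := by linarith
      have hpos : 0 < (-EE) / (CC + 1) := div_pos (by linarith) hden
      have h3 := hkey (min 1 ((-EE) / (CC + 1))) (lt_min one_pos hpos) (min_le_left _ _)
      have h2 : min 1 ((-EE) / (CC + 1)) ≤ (-EE) / (CC + 1) := min_le_right _ _
      have h4 : CC * min 1 ((-EE) / (CC + 1)) ≤ CC * ((-EE) / (CC + 1)) :=
        mul_le_mul_of_nonneg_left h2 hCC0
      have h5 : CC * ((-EE) / (CC + 1)) < -EE := by
        rw [mul_div_assoc', div_lt_iff₀ hden]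
        have : -EE * (CC + 1) - CC * -EE = -EE := by ring
        linarith
      linarith
    intro ε' hε'0 hε'1
    -- uniform continuity data
    have hKuc : UniformContinuous fun p : X × X => K p.1 p.2 :=
      CompactSpace.uniformContinuous_of_continuous hKcont
    obtain ⟨δK, hδK0, hδK⟩ := Metric.uniformContinuous_iff.1 hKuc ε' hε'0
    have hFc : Continuous (fun x : X => (fun j => f j x : Fin k → ℝ)) :=
      continuous_pi fun j => hfc j
    obtain ⟨δf, hδf0, hδf⟩ := Metric.uniformContinuous_iff.1
      (CompactSpace.uniformContinuous_of_continuous hFc) ε' hε'0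
    have hKs : ∀ (z z' w : X), dist z z' < δK → |K z w - K z' w| ≤ ε' := by
      intro z z' w hd
      have hdp : dist ((z, w) : X × X) (z', w) < δK := by
        rw [Prod.dist_eq]
        simpa [dist_self, max_eq_left dist_nonneg] using hd
      have := hδK hdp
      rw [Real.dist_eq] at this
      exact this.le
    have hKs2 : ∀ (z w w' : X), dist w w' < δK → |K z w - K z w'| ≤ ε' := by
      intro z w w' hd
      have hdp : dist ((z, w) : X × X) (z, w') < δK := by
        rw [Prod.dist_eq]
        simpa [dist_self, max_eq_right dist_nonneg] using hd
      have := hδK hdp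
      rw [Real.dist_eq] at this
      exact this.le
    have hfs : ∀ (j : Fin k) (z z' : X), dist z z' < δf → |f j z - f j z'| ≤ ε' := by
      intro j z z' hd
      have := hδf hd
      have h2 := dist_le_pi_dist (fun j => f j z : Fin k → ℝ) (fun j => f j z') j
      rw [Real.dist_eq] at h2
      exact h2.trans this.le
    -- partition
    obtain ⟨n, c, A, hmeas, hdisj, hcover, hsmall⟩ :=
      exists_partition (X := X) (min δK δf) (lt_min hδK0 hδf0)
    have hsmallK : ∀ i, ∀ z ∈ A i, dist z (c i) < δK :=
      fun i z hz' => lt_of_lt_of_le (hsmall i z hz') (min_le_left _ _)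
    have hsmallf : ∀ i, ∀ z ∈ A i, dist z (c i) < δf :=
      fun i z hz' => lt_of_lt_of_le (hsmall i z hz') (min_le_right _ _)
    set a : Fin n → ℝ := fun i => (μ (A i)).toReal with hadef
    set b : Fin n → ℝ := fun i => (ν (A i)).toReal with hbdef
    set α : Fin n → ℝ := fun i => a i - b i with hα
    have ha0 : ∀ i, 0 ≤ a i := fun i => ENNReal.toReal_nonneg
    have hb0 : ∀ i, 0 ≤ b i := fun i => ENNReal.toReal_nonneg
    have hsuma : ∑ i, a i = Mμ := sum_measure_partition μ A hmeas hdisj hcover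
    have hsumb : ∑ i, b i = Mν := sum_measure_partition ν A hmeas hdisj hcover
    have hsumα : ∑ i, |α i| ≤ M := by
      calc (∑ i, |α i|) ≤ ∑ i, (a i + b i) := Finset.sum_le_sum fun i _ => by
            rw [hα]
            calc |a i - b i| ≤ |a i| + |b i| := abs_sub _ _
              _ = a i + b i := by rw [abs_of_nonneg (ha0 i), abs_of_nonneg (hb0 i)]
        _ = M := by rw [Finset.sum_add_distrib, hsuma, hsumb]
    -- moments are small
    have hmomf : ∀ j : Fin k, |∑ i, α i * f j (c i)| ≤ ε' * M := by
      intro j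
      have h1 := approx_integral μ (hfc j) c A hmeas hdisj hcover (ε := ε')
        (fun i z hz' => hfs j z (c i) (hsmallf i z hz'))
      have h2 := approx_integral ν (hfc j) c A hmeas hdisj hcover (ε := ε')
        (fun i z hz' => hfs j z (c i) (hsmallf i z hz'))
      have h3 : (∫ z, f j z ∂μ) - (∫ z, f j z ∂ν) = 0 :=
        hz (f j) (Submodule.subset_span ⟨j, rfl⟩)
      have h4 : (∑ i, α i * f j (c i))
          = -((∫ z, f j z ∂μ) - ∑ i, a i * f j (c i))
            + ((∫ z, f j z ∂ν) - ∑ i, b i * f j (c i))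
            + ((∫ z, f j z ∂μ) - (∫ z, f j z ∂ν)) := by
        rw [show (∑ i, α i * f j (c i)) = (∑ i, a i * f j (c i)) - ∑ i, b i * f j (c i) by
          rw [← Finset.sum_sub_distrib]
          apply Finset.sum_congr rfl
          intro i _
          rw [hα]
          ring]
        ring
      rw [h4, h3]
      have h5 : |(∫ z, f j z ∂μ) - ∑ i, a i * f j (c i)| ≤ ε' * Mμ := h1
      have h6 : |(∫ z, f j z ∂ν) - ∑ i, b i * f j (c i)| ≤ ε' * Mν := h2
      calc |-((∫ z, f j z ∂μ) - ∑ i, a i * f j (c i))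
            + ((∫ z, f j z ∂ν) - ∑ i, b i * f j (c i)) + 0|
          ≤ |(∫ z, f j z ∂μ) - ∑ i, a i * f j (c i)|
            + |(∫ z, f j z ∂ν) - ∑ i, b i * f j (c i)| := by
            rw [add_zero]
            exact (abs_add_le _ _).trans (by rw [abs_neg])
        _ ≤ ε' * Mμ + ε' * Mν := add_le_add h5 h6
        _ = ε' * M := by rw [hM]; ring
    -- the correction coefficients
    set d : Fin k → ℝ := fun j => ∑ i, α i * f j (c i) with hd
    set β : Fin m → ℝ := R (fun j => -(d j)) with hβ
    have hβf : ∀ j, (∑ l, β l * f j (y l)) = -(d j) := fun j => hRy (fun j => -(d j)) j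
    have hβsum : ∑ l, |β l| ≤ ε' * L0 := by
      calc (∑ l, |β l|) ≤ Lc * ∑ j, |-(d j)| := hLcb _
        _ = Lc * ∑ j, |d j| := by simp only [abs_neg]
        _ ≤ Lc * ∑ j : Fin k, ε' * M := by
            apply mul_le_mul_of_nonneg_left _ hLc0
            exact Finset.sum_le_sum fun j _ => hmomf j
        _ = Lc * ((k : ℝ) * (ε' * M)) := by
            rw [Finset.sum_const, Finset.card_univ, Fintype.card_fin, nsmul_eq_mul]
        _ = ε' * L0 := by rw [hL0]; ring
    have hβsum0 : 0 ≤ ∑ l, |β l| := Finset.sum_nonneg fun l _ => abs_nonneg _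
    -- apply the discrete hypothesis
    set p : Fin (n + m) → X := Fin.append c y with hp
    set γ : Fin (n + m) → ℝ := Fin.append α β with hγ
    have hannil : ∀ g ∈ Submodule.span ℝ (Set.range f), ∑ i, γ i * g (p i) = 0 := by
      apply ann_span
      intro j
      rw [Fin.sum_univ_add]
      simp only [hp, hγ, Fin.append_left, Fin.append_right]
      rw [hβf j, hd]
      ring
    have hQ := H (n + m) p γ hannil
    obtain ⟨Scc, hScc⟩ : ∃ r : ℝ, r = ∑ i, ∑ i', α i * α i' * K (c i) (c i') := ⟨_, rfl⟩
    obtain ⟨Scy, hScy⟩ : ∃ r : ℝ, r = ∑ i, ∑ l, α i * β l * K (c i) (y l) := ⟨_, rfl⟩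
    obtain ⟨Syc, hSyc⟩ : ∃ r : ℝ, r = ∑ l, ∑ i, β l * α i * K (y l) (c i) := ⟨_, rfl⟩
    obtain ⟨Syy, hSyy⟩ : ∃ r : ℝ, r = ∑ l, ∑ l', β l * β l' * K (y l) (y l') := ⟨_, rfl⟩
    have hQ' : 0 ≤ Scc + Scy + (Syc + Syy) := by
      have h := hQ
      simp only [Fin.sum_univ_add, hp, hγ, Fin.append_left, Fin.append_right] at h
      rw [Finset.sum_add_distrib, Finset.sum_add_distrib] at h
      rw [hScc, hScy, hSyc, hSyy]
      exact h
    -- bounds on cross terms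
    have habs : ∀ {n1 n2 : ℕ} (u : Fin n1 → ℝ) (v : Fin n2 → ℝ)
        (z : Fin n1 → X) (w : Fin n2 → X),
        |∑ i, ∑ l, u i * v l * K (z i) (w l)| ≤ C * (∑ i, |u i|) * (∑ l, |v l|) := by
      intro n1 n2 u v z w
      calc |∑ i, ∑ l, u i * v l * K (z i) (w l)|
          ≤ ∑ i, |∑ l, u i * v l * K (z i) (w l)| := Finset.abs_sum_le_sum_abs _ _
        _ ≤ ∑ i, ∑ l, |u i * v l * K (z i) (w l)| :=
            Finset.sum_le_sum fun i _ => Finset.abs_sum_le_sum_abs _ _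
        _ ≤ ∑ i, ∑ l, |u i| * (|v l| * C) := by
            apply Finset.sum_le_sum
            intro i _
            apply Finset.sum_le_sum
            intro l _
            rw [abs_mul, abs_mul, mul_assoc]
            apply mul_le_mul_of_nonneg_left _ (abs_nonneg _)
            exact mul_le_mul_of_nonneg_left (hC ((z i), (w l))) (abs_nonneg _)
        _ = C * (∑ i, |u i|) * (∑ l, |v l|) := by
            simp only [← Finset.sum_mul, ← Finset.mul_sum]
            ring
    have hScybd : |Scy| ≤ C * M * (ε' * L0) := by
      rw [hScy]
      exact (habs α β c y).trans (mul_le_mul (mul_le_mul_of_nonneg_left hsumα hC0)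
        hβsum hβsum0 (by positivity))
    have hSycbd : |Syc| ≤ C * (ε' * L0) * M := by
      rw [hSyc]
      refine (habs β α y c).trans ?_
      exact mul_le_mul (mul_le_mul_of_nonneg_left hβsum hC0)
        hsumα (Finset.sum_nonneg fun i _ => abs_nonneg _) (by positivity)
    have hSyybd : |Syy| ≤ C * (ε' * L0) * (ε' * L0) := by
      rw [hSyy]
      refine (habs β β y y).trans ?_
      exact mul_le_mul (mul_le_mul_of_nonneg_left hβsum hC0)
        hβsum hβsum0 (by positivity)
    -- approximating the double integral by Scc
    set h : X → ℝ := fun z => (∫ w, K z w ∂μ) - ∫ w, K z w ∂ν with hh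
    have hhc : Continuous h :=
      (cont_param_integral hKcont μ).sub (cont_param_integral hKcont ν)
    have hEint : T1 - T2 - T3 + T4 = (∫ z, h z ∂μ) - ∫ z, h z ∂ν := by
      rw [hh]
      rw [integral_sub (integrable_of_cont (cont_param_integral hKcont μ) μ)
        (integrable_of_cont (cont_param_integral hKcont ν) μ),
        integral_sub (integrable_of_cont (cont_param_integral hKcont μ) ν)
        (integrable_of_cont (cont_param_integral hKcont ν) ν)]
      rw [hT1, hT2, hT3, hT4]
      ring
    have hparamdiff : ∀ (ρ : Measure X) (_ : IsFiniteMeasure ρ) (z z' : X),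
        dist z z' < δK → |(∫ w, K z w ∂ρ) - ∫ w, K z' w ∂ρ| ≤ ε' * (ρ Set.univ).toReal := by
      intro ρ hρ z z' hdzz
      rw [← integral_sub (integrable_of_cont (hKzc z) ρ) (integrable_of_cont (hKzc z') ρ)]
      have hble : ∀ᵐ w ∂ρ, ‖K z w - K z' w‖ ≤ ε' :=
        ae_of_all _ fun w => by rw [Real.norm_eq_abs]; exact hKs z z' w hdzz
      have := norm_integral_le_of_norm_le_const hble
      simpa [Real.norm_eq_abs, measureReal_def] using this
    have hhsmall : ∀ i, ∀ z ∈ A i, |h z - h (c i)| ≤ ε' * M := by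
      intro i z hz'
      have h1 := hparamdiff μ hμ z (c i) (hsmallK i z hz')
      have h2 := hparamdiff ν hν z (c i) (hsmallK i z hz')
      have : h z - h (c i) = ((∫ w, K z w ∂μ) - ∫ w, K (c i) w ∂μ)
          - ((∫ w, K z w ∂ν) - ∫ w, K (c i) w ∂ν) := by rw [hh]; ring
      rw [this]
      calc |((∫ w, K z w ∂μ) - ∫ w, K (c i) w ∂μ)
            - ((∫ w, K z w ∂ν) - ∫ w, K (c i) w ∂ν)|
          ≤ |(∫ w, K z w ∂μ) - ∫ w, K (c i) w ∂μ|
            + |(∫ w, K z w ∂ν) - ∫ w, K (c i) w ∂ν| := abs_sub _ _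
        _ ≤ ε' * Mμ + ε' * Mν := add_le_add h1 h2
        _ = ε' * M := by rw [hM]; ring
    have hint1 := approx_integral μ hhc c A hmeas hdisj hcover (ε := ε' * M) hhsmall
    have hint2 := approx_integral ν hhc c A hmeas hdisj hcover (ε := ε' * M) hhsmall
    -- pointwise approximation of h (c i)
    have hpoint : ∀ i, |h (c i) - ∑ i', α i' * K (c i) (c i')| ≤ ε' * M := by
      intro i
      have h1 := approx_integral μ (hKzc (c i)) c A hmeas hdisj hcover (ε := ε')
        (fun i' w hw => hKs2 (c i) w (c i') (hsmallK i' w hw))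
      have h2 := approx_integral ν (hKzc (c i)) c A hmeas hdisj hcover (ε := ε')
        (fun i' w hw => hKs2 (c i) w (c i') (hsmallK i' w hw))
      have h4 : h (c i) - ∑ i', α i' * K (c i) (c i')
          = ((∫ w, K (c i) w ∂μ) - ∑ i', a i' * K (c i) (c i'))
            - ((∫ w, K (c i) w ∂ν) - ∑ i', b i' * K (c i) (c i')) := by
        rw [hh, show (∑ i', α i' * K (c i) (c i'))
            = (∑ i', a i' * K (c i) (c i')) - ∑ i', b i' * K (c i) (c i') by
          rw [← Finset.sum_sub_distrib]
          apply Finset.sum_congr rfl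
          intro i' _
          rw [hα]
          ring]
        ring
      rw [h4]
      calc |((∫ w, K (c i) w ∂μ) - ∑ i', a i' * K (c i) (c i'))
            - ((∫ w, K (c i) w ∂ν) - ∑ i', b i' * K (c i) (c i'))|
          ≤ |(∫ w, K (c i) w ∂μ) - ∑ i', a i' * K (c i) (c i')|
            + |(∫ w, K (c i) w ∂ν) - ∑ i', b i' * K (c i) (c i')| := abs_sub _ _
        _ ≤ ε' * Mμ + ε' * Mν := add_le_add h1 h2
        _ = ε' * M := by rw [hM]; ring
    have hsum3 : |(∑ i, α i * h (c i)) - Scc| ≤ ε' * M * M := by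
      have hSccform : Scc = ∑ i, α i * ∑ i', α i' * K (c i) (c i') := by
        rw [hScc]
        apply Finset.sum_congr rfl
        intro i _
        rw [Finset.mul_sum]
        apply Finset.sum_congr rfl
        intros
        ring
      rw [hSccform, ← Finset.sum_sub_distrib]
      calc |∑ i, (α i * h (c i) - α i * ∑ i', α i' * K (c i) (c i'))|
          ≤ ∑ i, |α i * h (c i) - α i * ∑ i', α i' * K (c i) (c i')| :=
            Finset.abs_sum_le_sum_abs _ _
        _ = ∑ i, |α i| * |h (c i) - ∑ i', α i' * K (c i) (c i')| := by
            apply Finset.sum_congr rfl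
            intros i _
            rw [show α i * h (c i) - α i * ∑ i', α i' * K (c i) (c i')
              = α i * (h (c i) - ∑ i', α i' * K (c i) (c i')) from by ring, abs_mul]
        _ ≤ ∑ i, |α i| * (ε' * M) :=
            Finset.sum_le_sum fun i _ =>
              mul_le_mul_of_nonneg_left (hpoint i) (abs_nonneg _)
        _ = (∑ i, |α i|) * (ε' * M) := by rw [← Finset.sum_mul]
        _ ≤ M * (ε' * M) := mul_le_mul_of_nonneg_right hsumα (by positivity)
        _ = ε' * M * M := by ring
    -- assemble
    have hsumαh : (∑ i, α i * h (c i))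
        = (∑ i, a i * h (c i)) - ∑ i, b i * h (c i) := by
      rw [← Finset.sum_sub_distrib]
      apply Finset.sum_congr rfl
      intro i _
      rw [hα]
      ring
    have hEapprox : |(T1 - T2 - T3 + T4) - Scc| ≤ 2 * (ε' * M * M) := by
      have e1 : (T1 - T2 - T3 + T4) - Scc
          = ((∫ z, h z ∂μ) - ∑ i, a i * h (c i))
            - ((∫ z, h z ∂ν) - ∑ i, b i * h (c i))
            + ((∑ i, α i * h (c i)) - Scc) := by
        rw [hEint, hsumαh]
        ring
      rw [e1]
      have e2 := abs_add_le (((∫ z, h z ∂μ) - ∑ i, a i * h (c i))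
            - ((∫ z, h z ∂ν) - ∑ i, b i * h (c i)))
          ((∑ i, α i * h (c i)) - Scc)
      have e3 := abs_sub ((∫ z, h z ∂μ) - ∑ i, a i * h (c i))
          ((∫ z, h z ∂ν) - ∑ i, b i * h (c i))
      have b1 : |(∫ z, h z ∂μ) - ∑ i, a i * h (c i)| ≤ ε' * M * Mμ := hint1
      have b2 : |(∫ z, h z ∂ν) - ∑ i, b i * h (c i)| ≤ ε' * M * Mν := hint2
      have : ε' * M * Mμ + ε' * M * Mν + ε' * M * M = 2 * (ε' * M * M) := by
        rw [hM]; ring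
      linarith [hsum3]
    -- final inequality
    have hfinal : -(CC * ε') ≤ T1 - T2 - T3 + T4 := by
      have g1 : Scc ≥ -(|Scy| + |Syc| + |Syy|) := by
        have l1 := le_abs_self Scy
        have l2 := le_abs_self Syc
        have l3 := le_abs_self Syy
        linarith only [hQ', l1, l2, l3]
      have g2 : T1 - T2 - T3 + T4 ≥ Scc - 2 * (ε' * M * M) := by
        have := abs_le.1 hEapprox
        linarith [this.1]
      have g3 : T1 - T2 - T3 + T4
          ≥ -(C * M * (ε' * L0) + C * (ε' * L0) * M + C * (ε' * L0) * (ε' * L0))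
            - 2 * (ε' * M * M) := by
        linarith [hScybd, hSycbd, hSyybd]
      have g4 : C * M * (ε' * L0) + C * (ε' * L0) * M + C * (ε' * L0) * (ε' * L0)
            + 2 * (ε' * M * M) ≤ CC * ε' := by
        have hε'sq : ε' * ε' ≤ ε' := mul_le_of_le_one_left hε'0.le hε'1
        have hq2 : C * L0^2 * (ε' * ε') ≤ C * L0^2 * ε' :=
          mul_le_mul_of_nonneg_left hε'sq (by positivity)
        have expand : CC * ε' - (C * M * (ε' * L0) + C * (ε' * L0) * M
            + C * (ε' * L0) * (ε' * L0) + 2 * (ε' * M * M))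
            = C * L0^2 * ε' - C * L0^2 * (ε' * ε') := by
          rw [hCC, hM]
          ring
        linarith
      linarith
    exact hfinal
  · -- CPD for measures implies CPD for sums
    intro H n x α hann
    set a : Fin n → ℝ≥0 := fun i => (α i).toNNReal with ha
    set b : Fin n → ℝ≥0 := fun i => (-(α i)).toNNReal with hb
    have hab : ∀ i, ((a i : ℝ)) - (b i : ℝ) = α i := fun i => toNNReal_sub_self (α i)
    set μ : Measure X := ∑ i, ((a i : ENNReal) • Measure.dirac (x i)) with hμdef
    set ν : Measure X := ∑ i, ((b i : ENNReal) • Measure.dirac (x i)) with hνdef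
    have hμ : IsFiniteMeasure μ := by
      constructor
      rw [hμdef, Measure.finset_sum_apply]
      exact ENNReal.sum_lt_top.2 fun i _ => by
        simp [Measure.smul_apply]
    have hν : IsFiniteMeasure ν := by
      constructor
      rw [hνdef, Measure.finset_sum_apply]
      exact ENNReal.sum_lt_top.2 fun i _ => by
        simp [Measure.smul_apply]
    have hKx : ∀ z : X, Continuous fun y => K z y :=
      fun z => hKcont.comp (Continuous.prodMk_right z)
    have key := H μ ν hμ hν (by
      intro g hg
      have hgc : Continuous g := cont_of_mem_span hfc hg
      rw [hμdef, hνdef, integral_dirac_sum a x hgc, integral_dirac_sum b x hgc,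
        ← Finset.sum_sub_distrib]
      rw [show (∑ i, ((a i : ℝ) * g (x i) - (b i : ℝ) * g (x i)))
          = ∑ i, α i * g (x i) by
        apply Finset.sum_congr rfl; intro i _; rw [← hab i]; ring]
      exact hann g hg)
    -- compute the four double integrals
    have hinner : ∀ (w : Fin n → ℝ≥0), (fun z => ∫ y, K z y ∂(∑ i, ((w i : ENNReal) • Measure.dirac (x i)))) = fun z => ∑ i, (w i : ℝ) * K z (x i) := by
      intro w
      funext z
      exact integral_dirac_sum w x (hKx z)
    have houter : ∀ (w w' : Fin n → ℝ≥0),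
        (∫ z, ∫ y, K z y ∂(∑ i, ((w' i : ENNReal) • Measure.dirac (x i)))
          ∂(∑ i, ((w i : ENNReal) • Measure.dirac (x i))))
        = ∑ i, (w i : ℝ) * ∑ j, (w' j : ℝ) * K (x i) (x j) := by
      intro w w'
      rw [hinner w']
      exact integral_dirac_sum w x (by
        apply continuous_finset_sum
        intro j _
        exact continuous_const.mul (hKcont.comp (continuous_id.prodMk continuous_const)))
    rw [hμdef, hνdef, houter a a, houter a b, houter b a, houter b b] at key
    refine le_trans key (le_of_eq ?_)
    rw [← Finset.sum_sub_distrib, ← Finset.sum_sub_distrib, ← Finset.sum_add_distrib]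
    apply Finset.sum_congr rfl
    intro i _
    rw [Finset.mul_sum, Finset.mul_sum, Finset.mul_sum, Finset.mul_sum,
      ← Finset.sum_sub_distrib, ← Finset.sum_sub_distrib, ← Finset.sum_add_distrib]
    apply Finset.sum_congr rfl
    intro j _
    rw [← hab i, ← hab j]
    ring
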